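/- Let h(x) = 1/(1 + exp(-x)) be the logistic function, let 0 ≤ p < 1/2, and define c(x) = h(x)(1-p) + (1-h(x))p. Then for all real x, |c'(x)| ≤ (1 - 2p) · c(x)(1 - c(x)). -/

import Mathlib

theorem stmt_9 (p : ℝ) (hp0 : 0 ≤ p) (hp : p < 1 / 2)
    (h c : ℝ → ℝ) (hdef : ∀ x, h x = 1 / (1 + Real.exp (-x)))
    (hc : ∀ x, c x = h x * (1 - p) + (1 - h x) * p) :
    ∀ x : ℝ, |deriv c x| ≤ (1 - 2 * p) * (c x * (1 - c x)) := by
  intro x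
  have hcfun : c = fun y => p + (1 - 2 * p) * (1 / (1 + Real.exp (-y))) := by
    funext y; rw [hc, hdef]; ring
  set E := Real.exp (-x) with hE
  have hEpos : 0 < E := Real.exp_pos _
  have hDpos : (0:ℝ) < 1 + E := by linarith
  have hDne : (1 + E) ≠ 0 := ne_of_gt hDpos
  have hd1 : HasDerivAt (fun y : ℝ => 1 + Real.exp (-y)) (Real.exp (-x) * (-1)) x := by
    exact ((hasDerivAt_id x).neg.exp).const_add 1
  have hd2 : HasDerivAt (fun y : ℝ => (1 + Real.exp (-y))⁻¹)
      (-(Real.exp (-x) * (-1)) / (1 + Real.exp (-x)) ^ 2) x := hd1.inv hDne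
  have hd3 : HasDerivAt c ((1 - 2 * p) * (-(Real.exp (-x) * (-1)) / (1 + Real.exp (-x)) ^ 2)) x := by
    rw [hcfun]
    simp only [one_div]
    exact (hd2.const_mul (1 - 2 * p)).const_add p
  have hderiv : deriv c x = (1 - 2 * p) * (E / (1 + E) ^ 2) := by
    rw [hd3.deriv]; ring_nf; rfl
  have hhx : h x = 1 / (1 + E) := hdef x
  have hh1 : 1 - h x = E / (1 + E) := by rw [hhx]; field_simp; ring
  have hprod : h x * (1 - h x) = E / (1 + E) ^ 2 := by
    rw [hh1, hhx, div_mul_div_comm, one_mul, sq]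
  have h2p : 0 < 1 - 2 * p := by linarith
  have hpos : 0 ≤ E / (1 + E) ^ 2 := by positivity
  have habs : |deriv c x| = (1 - 2 * p) * (E / (1 + E) ^ 2) := by
    rw [hderiv, abs_of_nonneg (by positivity)]
  have hhpos : 0 < h x := by rw [hhx]; positivity
  have hhlt : h x < 1 := by
    rw [hhx]; rw [div_lt_one hDpos]; linarith
  have hquarter : h x * (1 - h x) ≤ 1 / 4 := by nlinarith [sq_nonneg (h x - 1/2)]
  rw [habs, ← hprod, hc x]
  have key : 0 ≤ (1 - 2 * p) * (p * (1 - p) * (1/4 - h x * (1 - h x))) :=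
    mul_nonneg h2p.le (mul_nonneg (mul_nonneg hp0 (by linarith)) (by linarith))
  nlinarith [key]
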